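/- Third-derivative cascade for I₁: let 0 < E₀ and let Ψ be three times continuously differentiable on [E₀, ∞). Define I₁(E) = (π/2) ∫_{E₀}^{E} (v + E) ( 7Ψ′(v) − 2Ψ(v)/v ) v^{−1/2} dv. Then the function z ↦ I₁(z²) is three times differentiable on (√E₀, ∞) and (2/π) (d³/dz³) I₁(z²) = 112 z⁴ Ψ‴(z²) + 304 z² Ψ″(z²) + 80 Ψ′(z²). -/

import Mathlib

open Set Real

/-- Third-derivative cascade for `I₁`:
with `I₁(E) = (π/2) ∫_{E₀}^E (v+E)(7Ψ′(v) − 2Ψ(v)/v) v^{−1/2} dv`, the function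
`z ↦ I₁(z²)` is three times differentiable on `(√E₀, ∞)` and
`(2/π) d³/dz³ I₁(z²) = 112 z⁴ Ψ‴(z²) + 304 z² Ψ″(z²) + 80 Ψ′(z²)`. -/
theorem cascade_I1 (E₀ : ℝ) (hE₀ : 0 < E₀)
    (Ψ Ψ' Ψ'' Ψ''' : ℝ → ℝ)
    (h1 : ∀ v ∈ Ici E₀, HasDerivWithinAt Ψ (Ψ' v) (Ici E₀) v)
    (h2 : ∀ v ∈ Ici E₀, HasDerivWithinAt Ψ' (Ψ'' v) (Ici E₀) v)
    (h3 : ∀ v ∈ Ici E₀, HasDerivWithinAt Ψ'' (Ψ''' v) (Ici E₀) v)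
    (hc : ContinuousOn Ψ''' (Ici E₀))
    (I₁ : ℝ → ℝ)
    (hI : ∀ e, I₁ e =
      (π/2) * ∫ v in E₀..e, (v + e) * (7 * Ψ' v - 2 * Ψ v / v) / Real.sqrt v) :
    (∀ z ∈ Ioi (Real.sqrt E₀),
      DifferentiableAt ℝ (fun z => I₁ (z^2)) z ∧
      DifferentiableAt ℝ (deriv (fun z => I₁ (z^2))) z ∧
      DifferentiableAt ℝ (deriv (deriv (fun z => I₁ (z^2)))) z) ∧
    (∀ z ∈ Ioi (Real.sqrt E₀),
      (2/π) * deriv (deriv (deriv (fun z => I₁ (z^2)))) z =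
        112 * z^4 * Ψ''' (z^2) + 304 * z^2 * Ψ'' (z^2) + 80 * Ψ' (z^2)) := by
  -- continuity of the data
  have cΨ : ContinuousOn Ψ (Ici E₀) := fun v hv => (h1 v hv).continuousWithinAt
  have cΨ' : ContinuousOn Ψ' (Ici E₀) := fun v hv => (h2 v hv).continuousWithinAt
  have cΨ'' : ContinuousOn Ψ'' (Ici E₀) := fun v hv => (h3 v hv).continuousWithinAt
  have hvpos : ∀ v ∈ Ici E₀, (0:ℝ) < v := fun v hv => lt_of_lt_of_le hE₀ hv
  set q : ℝ → ℝ := fun v => (7 * Ψ' v - 2 * Ψ v / v) / Real.sqrt v with hq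
  have cq : ContinuousOn q (Ici E₀) := by
    apply ContinuousOn.div
    · exact (continuousOn_const.mul cΨ').sub
        ((continuousOn_const.mul cΨ).div continuousOn_id (fun v hv => (hvpos v hv).ne'))
    · exact Real.continuous_sqrt.continuousOn
    · exact fun v hv => (Real.sqrt_pos.mpr (hvpos v hv)).ne'
  have ck : ContinuousOn (fun v => v * q v) (Ici E₀) := continuousOn_id.mul cq
  set B : ℝ → ℝ := fun e => ∫ v in E₀..e, q v with hB
  set A : ℝ → ℝ := fun e => ∫ v in E₀..e, v * q v with hA
  have hintq : ∀ e, E₀ ≤ e → IntervalIntegrable q MeasureTheory.volume E₀ e := fun e he =>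
    (cq.mono (by rw [uIcc_of_le he]; exact Icc_subset_Ici_self)).intervalIntegrable
  have hintk : ∀ e, E₀ ≤ e → IntervalIntegrable (fun v => v * q v) MeasureTheory.volume E₀ e :=
    fun e he =>
    (ck.mono (by rw [uIcc_of_le he]; exact Icc_subset_Ici_self)).intervalIntegrable
  -- representation of I₁
  have hrep : ∀ e, E₀ ≤ e → I₁ e = (π/2) * (A e + e * B e) := by
    intro e he
    rw [hI]
    congr 1
    have h1 : (fun v => (v + e) * (7 * Ψ' v - 2 * Ψ v / v) / Real.sqrt v)
        = fun v => v * q v + e * q v := by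
      funext v; simp only [hq]; ring
    rw [h1, intervalIntegral.integral_add (hintk e he) ((hintq e he).const_mul e),
      intervalIntegral.integral_const_mul]
  -- FTC derivatives
  have hBd : ∀ e, E₀ < e → HasDerivAt B (q e) e := by
    intro e he
    exact intervalIntegral.integral_hasDerivAt_right (hintq e he.le)
      ((cq.mono Ioi_subset_Ici_self).stronglyMeasurableAtFilter isOpen_Ioi e he)
      (cq.continuousAt (Ici_mem_nhds he))
  have hAd : ∀ e, E₀ < e → HasDerivAt A (e * q e) e := by
    intro e he
    exact intervalIntegral.integral_hasDerivAt_right (hintk e he.le)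
      ((ck.mono Ioi_subset_Ici_self).stronglyMeasurableAtFilter isOpen_Ioi e he)
      (ck.continuousAt (Ici_mem_nhds he))
  -- pointwise derivatives of Ψ at interior points
  have hΨd : ∀ e, E₀ < e → HasDerivAt Ψ (Ψ' e) e :=
    fun e he => (h1 e he.le).hasDerivAt (Ici_mem_nhds he)
  have hΨ'd : ∀ e, E₀ < e → HasDerivAt Ψ' (Ψ'' e) e :=
    fun e he => (h2 e he.le).hasDerivAt (Ici_mem_nhds he)
  have hΨ''d : ∀ e, E₀ < e → HasDerivAt Ψ'' (Ψ''' e) e :=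
    fun e he => (h3 e he.le).hasDerivAt (Ici_mem_nhds he)
  -- explicit derivatives
  set F : ℝ → ℝ := fun z => I₁ (z^2) with hF
  set F1 : ℝ → ℝ := fun z =>
    (π/2) * (28 * z^2 * Ψ' (z^2) - 8 * Ψ (z^2) + 2 * z * B (z^2)) with hF1
  set F2 : ℝ → ℝ := fun z =>
    (π/2) * (56 * z^3 * Ψ'' (z^2) + 68 * z * Ψ' (z^2) - 8 * Ψ (z^2) / z + 2 * B (z^2)) with hF2
  set F3 : ℝ → ℝ := fun z =>
    (π/2) * (112 * z^4 * Ψ''' (z^2) + 304 * z^2 * Ψ'' (z^2) + 80 * Ψ' (z^2)) with hF3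
  set S : Set ℝ := Ioi (Real.sqrt E₀) with hS
  have hSopen : IsOpen S := isOpen_Ioi
  have hmem : ∀ z ∈ S, 0 < z ∧ E₀ < z^2 := by
    intro z hz
    have h0 : 0 < z := lt_of_le_of_lt (Real.sqrt_nonneg E₀) hz
    exact ⟨h0, (Real.sqrt_lt' h0).mp hz⟩
  have hzsq : ∀ z : ℝ, HasDerivAt (fun w : ℝ => w^2) (2*z) z := by
    intro z; simpa using hasDerivAt_pow 2 z
  have comp2 : ∀ (z : ℝ) (G : ℝ → ℝ) (d : ℝ), HasDerivAt G d (z^2) →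
      HasDerivAt (fun w : ℝ => G (w^2)) (d * (2*z)) z := by
    intro z G d hG
    have := HasDerivAt.comp (h := fun w : ℝ => w^2) z hG (hzsq z)
    exact this
  -- first derivative
  have step1 : ∀ z ∈ S, HasDerivAt F (F1 z) z := by
    intro z hz
    obtain ⟨hz0, he⟩ := hmem z hz
    have hsq : Real.sqrt (z^2) = z := Real.sqrt_sq hz0.le
    have hA2 : HasDerivAt (fun z : ℝ => A (z^2)) ((z^2 * q (z^2)) * (2*z)) z :=
      comp2 z A _ (hAd _ he)
    have hB2 : HasDerivAt (fun z : ℝ => B (z^2)) (q (z^2) * (2*z)) z :=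
      comp2 z B _ (hBd _ he)
    have hG : HasDerivAt (fun z : ℝ => (π/2) * (A (z^2) + z^2 * B (z^2)))
        ((π/2) * ((z^2 * q (z^2)) * (2*z) + ((2*z) * B (z^2) + z^2 * (q (z^2) * (2*z))))) z :=
      (hA2.add ((hzsq z).mul hB2)).const_mul (π/2)
    have heq : F =ᶠ[nhds z] fun z : ℝ => (π/2) * (A (z^2) + z^2 * B (z^2)) := by
      have hU : IsOpen {w : ℝ | E₀ < w^2} :=
        isOpen_lt continuous_const (continuous_pow 2)
      filter_upwards [hU.mem_nhds he] with w hw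
      exact hrep (w^2) (le_of_lt hw)
    have := hG.congr_of_eventuallyEq heq
    convert this using 1
    · rfl
    · rfl
    simp only [hF1, hq, hsq]
    field_simp
    ring
  have d1 : ∀ z ∈ S, deriv F z = F1 z := fun z hz => (step1 z hz).deriv
  -- second derivative
  have step2 : ∀ z ∈ S, HasDerivAt F1 (F2 z) z := by
    intro z hz
    obtain ⟨hz0, he⟩ := hmem z hz
    have hsq : Real.sqrt (z^2) = z := Real.sqrt_sq hz0.le
    have hΨ2 : HasDerivAt (fun z : ℝ => Ψ (z^2)) (Ψ' (z^2) * (2*z)) z :=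
      comp2 z Ψ _ (hΨd _ he)
    have hΨ'2 : HasDerivAt (fun z : ℝ => Ψ' (z^2)) (Ψ'' (z^2) * (2*z)) z :=
      comp2 z Ψ' _ (hΨ'd _ he)
    have hB2 : HasDerivAt (fun z : ℝ => B (z^2)) (q (z^2) * (2*z)) z :=
      comp2 z B _ (hBd _ he)
    have t1 : HasDerivAt (fun z : ℝ => 28 * z^2 * Ψ' (z^2))
        ((28 * (2*z)) * Ψ' (z^2) + (28 * z^2) * (Ψ'' (z^2) * (2*z))) z := by
      have := ((hzsq z).const_mul 28).mul hΨ'2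
      exact this
    have t2 : HasDerivAt (fun z : ℝ => 8 * Ψ (z^2)) (8 * (Ψ' (z^2) * (2*z))) z :=
      hΨ2.const_mul 8
    have t3 : HasDerivAt (fun z : ℝ => 2 * z * B (z^2))
        ((2 * 1) * B (z^2) + (2 * z) * (q (z^2) * (2*z))) z := by
      have := ((hasDerivAt_id z).const_mul 2).mul hB2
      exact this
    have hG := ((t1.sub t2).add t3).const_mul (π/2)
    have : F1 = fun z : ℝ =>
        (π/2) * (28 * z^2 * Ψ' (z^2) - 8 * Ψ (z^2) + 2 * z * B (z^2)) := hF1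
    rw [this]
    convert hG using 1
    · rfl
    · rfl
    · rfl
    simp only [hF2, hq, hsq]
    field_simp
    ring
  -- third derivative
  have step3 : ∀ z ∈ S, HasDerivAt F2 (F3 z) z := by
    intro z hz
    obtain ⟨hz0, he⟩ := hmem z hz
    have hsq : Real.sqrt (z^2) = z := Real.sqrt_sq hz0.le
    have hΨ2 : HasDerivAt (fun z : ℝ => Ψ (z^2)) (Ψ' (z^2) * (2*z)) z :=
      comp2 z Ψ _ (hΨd _ he)
    have hΨ'2 : HasDerivAt (fun z : ℝ => Ψ' (z^2)) (Ψ'' (z^2) * (2*z)) z :=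
      comp2 z Ψ' _ (hΨ'd _ he)
    have hΨ''2 : HasDerivAt (fun z : ℝ => Ψ'' (z^2)) (Ψ''' (z^2) * (2*z)) z :=
      comp2 z Ψ'' _ (hΨ''d _ he)
    have hB2 : HasDerivAt (fun z : ℝ => B (z^2)) (q (z^2) * (2*z)) z :=
      comp2 z B _ (hBd _ he)
    have hcube : HasDerivAt (fun w : ℝ => w^3) (3*z^2) z := by
      simpa using hasDerivAt_pow 3 z
    have t1 : HasDerivAt (fun z : ℝ => 56 * z^3 * Ψ'' (z^2))
        ((56 * (3*z^2)) * Ψ'' (z^2) + (56 * z^3) * (Ψ''' (z^2) * (2*z))) z := by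
      have := (hcube.const_mul 56).mul hΨ''2
      exact this
    have t2 : HasDerivAt (fun z : ℝ => 68 * z * Ψ' (z^2))
        ((68 * 1) * Ψ' (z^2) + (68 * z) * (Ψ'' (z^2) * (2*z))) z := by
      have := (((hasDerivAt_id z).const_mul 68)).mul hΨ'2
      exact this
    have t3 : HasDerivAt (fun z : ℝ => 8 * Ψ (z^2) / z)
        (((8 * (Ψ' (z^2) * (2*z))) * z - (8 * Ψ (z^2)) * 1) / z^2) z :=
      (hΨ2.const_mul 8).div (hasDerivAt_id z) hz0.ne'
    have t4 : HasDerivAt (fun z : ℝ => 2 * B (z^2)) (2 * (q (z^2) * (2*z))) z :=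
      hB2.const_mul 2
    have hG := (((t1.add t2).sub t3).add t4).const_mul (π/2)
    have : F2 = fun z : ℝ =>
        (π/2) * (56 * z^3 * Ψ'' (z^2) + 68 * z * Ψ' (z^2) - 8 * Ψ (z^2) / z + 2 * B (z^2)) := hF2
    rw [this]
    convert hG using 1
    · rfl
    · rfl
    · rfl
    simp only [hF3, hq, hsq]
    field_simp
    ring
  -- assemble
  have hD2 : ∀ z ∈ S, HasDerivAt (deriv F) (F2 z) z := by
    intro z hz
    refine (step2 z hz).congr_of_eventuallyEq ?_
    filter_upwards [hSopen.mem_nhds hz] with w hw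
    exact d1 w hw
  have d2 : ∀ z ∈ S, deriv (deriv F) z = F2 z := fun z hz => (hD2 z hz).deriv
  have hD3 : ∀ z ∈ S, HasDerivAt (deriv (deriv F)) (F3 z) z := by
    intro z hz
    refine (step3 z hz).congr_of_eventuallyEq ?_
    filter_upwards [hSopen.mem_nhds hz] with w hw
    exact d2 w hw
  have d3 : ∀ z ∈ S, deriv (deriv (deriv F)) z = F3 z := fun z hz => (hD3 z hz).deriv
  constructor
  · intro z hz
    exact ⟨(step1 z hz).differentiableAt, (hD2 z hz).differentiableAt,
      (hD3 z hz).differentiableAt⟩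
  · intro z hz
    rw [show deriv (deriv (deriv fun z => I₁ (z^2))) z = F3 z from d3 z hz, hF3]
    field_simp
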